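/- Let A be an integral domain containing a field k of characteristic zero, let d1, d2 be k-derivations on A, and suppose there exist x1, x2 ∈ A with d1(x1) = 1, d2(x2) = 1, d1(x2) = 0, d2(x1) = 0. Then x1 and x2 are algebraically independent over k. -/

import Mathlib

open MvPolynomial

lemma chain_rule {k A : Type*} [CommRing k] [CommRing A] [Algebra k A]
    (d : Derivation k A A) (v : Fin 2 → A) (P : MvPolynomial (Fin 2) k) :
    d (aeval v P) = aeval v (pderiv 0 P) * d (v 0) + aeval v (pderiv 1 P) * d (v 1) := by
  induction P using MvPolynomial.induction_on with
  | C a => simp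
  | add p q hp hq => simp only [map_add, hp, hq]; ring
  | mul_X p i hp =>
      fin_cases i <;>
      · simp only [map_mul, aeval_X, Derivation.leibniz, smul_eq_mul, pderiv_mul, map_add,
          hp, Fin.isValue, Fin.zero_eta, Fin.mk_one, pderiv_X, Pi.single_apply]
        norm_num
        ring

lemma pderiv_totalDegree_le {k : Type*} [CommRing k] {σ : Type*} [DecidableEq σ] (i : σ)
    (P : MvPolynomial σ k) {n : ℕ} (h : P.totalDegree ≤ n + 1) :
    (pderiv i P).totalDegree ≤ n := by
  conv_lhs => rw [P.as_sum]
  rw [map_sum]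
  refine MvPolynomial.totalDegree_finsetSum_le fun m hm => ?_
  rw [pderiv_monomial]
  rcases Nat.eq_zero_or_pos (m i) with h0 | h0
  · simp [h0]
  · refine (totalDegree_monomial_le _ _).trans ?_
    have hms : (m.sum fun _ e => e) ≤ n + 1 :=
      le_trans (MvPolynomial.le_totalDegree hm) h
    have hle : Finsupp.single i 1 ≤ m := by
      rw [Finsupp.single_le_iff]; exact h0
    have hsplit : m = (m - Finsupp.single i 1) + Finsupp.single i 1 :=
      (tsub_add_cancel_of_le hle).symm
    have : (m.sum fun _ => id) =
        ((m - Finsupp.single i 1).sum fun _ => (id : ℕ → ℕ)) + 1 := by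
      conv_lhs => rw [hsplit]
      rw [Finsupp.sum_add_index (by intros; rfl) (by intros; rfl)]
      simp
    have hms' : (m.sum fun _ => (id : ℕ → ℕ)) ≤ n + 1 := hms
    omega

lemma coeff_pderiv' {k : Type*} [CommRing k] {σ : Type*} [DecidableEq σ] (i : σ)
    (P : MvPolynomial σ k) (m : σ →₀ ℕ) :
    coeff m (pderiv i P) = (m i + 1) * coeff (m + Finsupp.single i 1) P := by
  induction P using MvPolynomial.induction_on' with
  | monomial s a =>
      rw [pderiv_monomial, coeff_monomial, coeff_monomial]
      rcases Nat.eq_zero_or_pos (s i) with h0 | h0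
      · have : s ≠ m + Finsupp.single i 1 := by
          intro h; rw [h] at h0; simp at h0
        simp [this, h0]
      · have hle : Finsupp.single i 1 ≤ s := by rw [Finsupp.single_le_iff]; exact h0
        have hiff : s - Finsupp.single i 1 = m ↔ s = m + Finsupp.single i 1 := by
          constructor
          · intro h; rw [← h, tsub_add_cancel_of_le hle]
          · intro h; rw [h]; simp
        by_cases h : s = m + Finsupp.single i 1
        · have hs : s i = m i + 1 := by rw [h]; simp
          simp [hiff.2 h, h, hs, mul_comm]
        · simp [h, hiff, (fun hh => h (hiff.1 hh) : ¬ s - Finsupp.single i 1 = m)]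
  | add p q hp hq => simp [hp, hq, mul_add]

/-- If d₁, d₂ are k-derivations on an integral domain A containing a field k of
characteristic zero, and x₁, x₂ ∈ A satisfy dᵢ(xᵢ) = 1, dᵢ(xⱼ) = 0 for i ≠ j,
then x₁ and x₂ are algebraically independent over k. -/
theorem alg_indep_of_dual_derivations
    (k A : Type*) [Field k] [CharZero k] [CommRing A] [IsDomain A] [Algebra k A]
    (d1 d2 : Derivation k A A) (x1 x2 : A)
    (h11 : d1 x1 = 1) (h22 : d2 x2 = 1) (h12 : d1 x2 = 0) (h21 : d2 x1 = 0) :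
    AlgebraicIndependent k ![x1, x2] := by
  rw [algebraicIndependent_iff]
  set v : Fin 2 → A := ![x1, x2] with hv
  have hv0 : v 0 = x1 := rfl
  have hv1 : v 1 = x2 := rfl
  have const : ∀ P : MvPolynomial (Fin 2) k,
      (∀ m : Fin 2 →₀ ℕ, m ≠ 0 → MvPolynomial.coeff m P = 0) →
      MvPolynomial.aeval v P = 0 → P = 0 := by
    intro P hm h0
    have hP : P = MvPolynomial.C (MvPolynomial.coeff 0 P) := by
      ext m
      rw [MvPolynomial.coeff_C]
      by_cases h : 0 = m
      · subst h; simp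
      · rw [if_neg h]; exact hm m (Ne.symm h)
    rw [hP] at h0 ⊢
    rw [MvPolynomial.aeval_C] at h0
    have : MvPolynomial.coeff 0 P = 0 := by
      have := (algebraMap k A).injective (by simpa using h0)
      simpa using this
    rw [this, map_zero]
  have key : ∀ (n : ℕ) (P : MvPolynomial (Fin 2) k), P.totalDegree ≤ n →
      MvPolynomial.aeval v P = 0 → P = 0 := by
    intro n
    induction n with
    | zero =>
        intro P hd h0
        refine const P (fun m hm => ?_) h0
        by_contra hc
        have hms : m ∈ P.support := MvPolynomial.mem_support_iff.2 hc
        have := (MvPolynomial.totalDegree_eq_zero_iff _ P).1 (Nat.le_zero.1 hd) m hms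
        exact hm (Finsupp.ext this)
    | succ n ih =>
        intro P hd h0
        have hp0 : MvPolynomial.aeval v (MvPolynomial.pderiv 0 P) = 0 := by
          have := chain_rule d1 v P
          rw [h0, map_zero, hv0, hv1, h11, h12] at this
          simpa using this.symm
        have hp1 : MvPolynomial.aeval v (MvPolynomial.pderiv 1 P) = 0 := by
          have := chain_rule d2 v P
          rw [h0, map_zero, hv0, hv1, h22, h21] at this
          simpa using this.symm
        have hz0 : MvPolynomial.pderiv (0 : Fin 2) P = 0 :=
          ih _ (pderiv_totalDegree_le 0 P hd) hp0
        have hz1 : MvPolynomial.pderiv (1 : Fin 2) P = 0 :=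
          ih _ (pderiv_totalDegree_le 1 P hd) hp1
        refine const P (fun m hm => ?_) h0
        obtain ⟨i, hi⟩ : ∃ i, m i ≠ 0 := by
          by_contra hc
          push_neg at hc
          exact hm (Finsupp.ext hc)
        have hz : MvPolynomial.pderiv i P = 0 := by
          fin_cases i
          · exact hz0
          · exact hz1
        have := coeff_pderiv' i P (m - Finsupp.single i 1)
        rw [hz] at this
        have hrec : (m - Finsupp.single i 1) + Finsupp.single i 1 = m := by
          apply tsub_add_cancel_of_le
          rw [Finsupp.single_le_iff]
          omega
        rw [hrec] at this
        simp only [MvPolynomial.coeff_zero] at this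
        have hne : ∀ c : ℕ, ((c : k) + 1) ≠ 0 := fun c => by
          norm_cast
        exact (mul_eq_zero.1 this.symm).resolve_left (hne _)
  intro p hp
  exact key p.totalDegree p le_rfl hp
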